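/- Let B(i) denote the i-th Bell number, i.e. the number of partitions of a set with i elements into nonempty pairwise disjoint blocks. For all positive integers k and n with k ≤ n, ∑_{i=1}^{k} C(n,i)·B(i) ≤ n^k · B(k+1), where C(n,i) denotes the binomial coefficient. -/

import Mathlib

/-- The `i`-th Bell number: the number of partitions of a set with `i` elements into
nonempty pairwise disjoint blocks covering the whole set. -/
def bell (i : ℕ) : ℕ :=
  (((Finset.univ : Finset (Fin i)).powerset.powerset).filter
    (fun P => (∀ b ∈ P, b.Nonempty) ∧
      (∀ b ∈ P, ∀ b' ∈ P, b ≠ b' → Disjoint b b') ∧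
      P.biUnion id = Finset.univ)).card

lemma bell_le_succ (i : ℕ) : bell i ≤ bell (i + 1) := by
  classical
  unfold bell
  apply Finset.card_le_card_of_injOn
    (fun P => insert {Fin.last i} (P.image (fun b => b.image Fin.castSucc)))
  · intro P hP
    simp only [Finset.mem_coe, Finset.mem_filter, Finset.mem_powerset] at hP ⊢
    obtain ⟨-, hne, hdisj, hcov⟩ := hP
    have hlast_not : ∀ b : Finset (Fin i), Fin.last i ∉ b.image Fin.castSucc := by
      intro b hmem
      obtain ⟨x, -, hx⟩ := Finset.mem_image.1 hmem
      exact (Fin.castSucc_lt_last x).ne hx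
    refine ⟨fun s _ => Finset.mem_powerset.2 (Finset.subset_univ s), ?_, ?_, ?_⟩
    · intro b hb
      rcases Finset.mem_insert.1 hb with h | h
      · exact h ▸ ⟨Fin.last i, Finset.mem_singleton_self _⟩
      · obtain ⟨c, hc, rfl⟩ := Finset.mem_image.1 h
        exact (hne c hc).image _
    · intro b hb b' hb' hbb'
      rcases Finset.mem_insert.1 hb with h | h <;>
        rcases Finset.mem_insert.1 hb' with h' | h'
      · exact absurd (h.trans h'.symm) hbb'
      · obtain ⟨c, hc, rfl⟩ := Finset.mem_image.1 h'
        subst h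
        exact Finset.disjoint_left.2 (by
          intro a ha hmem
          exact hlast_not c ((Finset.mem_singleton.1 ha) ▸ hmem))
      · obtain ⟨c, hc, rfl⟩ := Finset.mem_image.1 h
        subst h'
        exact Finset.disjoint_right.2 (by
          intro a ha hmem
          exact hlast_not c ((Finset.mem_singleton.1 ha) ▸ hmem))
      · obtain ⟨c, hc, rfl⟩ := Finset.mem_image.1 h
        obtain ⟨c', hc', rfl⟩ := Finset.mem_image.1 h'
        have hcc' : c ≠ c' := fun e => hbb' (by rw [e])
        exact Finset.disjoint_image (Fin.castSucc_injective i) |>.2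
          (hdisj c hc c' hc' hcc')
    · ext x
      simp only [Finset.mem_biUnion, id, Finset.mem_insert, Finset.mem_univ, iff_true]
      rcases Fin.eq_castSucc_or_eq_last x with ⟨y, rfl⟩ | rfl
      · have hy : y ∈ P.biUnion id := hcov ▸ Finset.mem_univ y
        obtain ⟨b, hb, hyb⟩ := Finset.mem_biUnion.1 hy
        exact ⟨b.image Fin.castSucc, Or.inr (Finset.mem_image_of_mem _ hb),
          Finset.mem_image_of_mem _ hyb⟩
      · exact ⟨{Fin.last i}, Or.inl rfl, Finset.mem_singleton_self _⟩
  · intro P hP Q hQ hPQ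
    have hlast_not : ∀ (R : Finset (Finset (Fin i))),
        ({Fin.last i} : Finset (Fin (i+1))) ∉ R.image (fun b => b.image Fin.castSucc) := by
      intro R hmem
      obtain ⟨c, -, hc⟩ := Finset.mem_image.1 hmem
      have : Fin.last i ∈ c.image Fin.castSucc := hc ▸ Finset.mem_singleton_self _
      obtain ⟨x, -, hx⟩ := Finset.mem_image.1 this
      exact (Fin.castSucc_lt_last x).ne hx
    have himg : P.image (fun b => b.image Fin.castSucc)
        = Q.image (fun b => b.image Fin.castSucc) := by
      have := congrArg (fun s => Finset.erase s {Fin.last i}) hPQ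
      simpa [Finset.erase_insert (hlast_not P), Finset.erase_insert (hlast_not Q)]
        using this
    exact Finset.image_injective
      (Finset.image_injective (Fin.castSucc_injective i)) himg

lemma bell_mono : Monotone bell := monotone_nat_of_le_succ bell_le_succ

lemma sum_choose_le (k n : ℕ) (hk : 0 < k) (hn : k ≤ n) :
    ∑ i ∈ Finset.Icc 1 k, Nat.choose n i ≤ n ^ k := by
  induction k, hk using Nat.le_induction with
  | base => simp [Nat.choose_one_right]
  | succ k hk ih =>
    have hn2 : 2 ≤ n := le_trans (by omega) hn
    have ih' := ih (by omega)
    rw [Finset.sum_Icc_succ_top (by omega)]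
    have hC : 2 * Nat.choose n (k + 1) ≤ n ^ (k + 1) := by
      calc 2 * Nat.choose n (k + 1) ≤ Nat.factorial (k+1) * Nat.choose n (k+1) :=
            Nat.mul_le_mul_right _ (Nat.succ_le_of_lt (Nat.one_lt_factorial.2 (by omega)))
        _ = n.descFactorial (k+1) := (Nat.descFactorial_eq_factorial_mul_choose n (k+1)).symm
        _ ≤ n ^ (k+1) := Nat.descFactorial_le_pow n (k+1)
    have h2 : 2 * (n ^ k + Nat.choose n (k + 1)) ≤ 2 * n ^ (k + 1) := by
      have hnk : 2 * n ^ k ≤ n ^ (k + 1) := by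
        rw [pow_succ]
        calc 2 * n ^ k = n ^ k * 2 := by ring
          _ ≤ n ^ k * n := Nat.mul_le_mul_left _ hn2
      omega
    have := Nat.le_of_mul_le_mul_left h2 (by norm_num)
    omega

/-- For all positive integers `k ≤ n`, `∑_{i=1}^{k} C(n,i)·B(i) ≤ n^k · B(k+1)`,
where `B` is the Bell number and `C` the binomial coefficient. -/
theorem sum_choose_bell_le (k n : ℕ) (hk : 0 < k) (hn : k ≤ n) :
    ∑ i ∈ Finset.Icc 1 k, Nat.choose n i * bell i ≤ n ^ k * bell (k + 1) := by
  calc ∑ i ∈ Finset.Icc 1 k, Nat.choose n i * bell i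
      ≤ ∑ i ∈ Finset.Icc 1 k, Nat.choose n i * bell (k + 1) := by
        apply Finset.sum_le_sum
        intro i hi
        exact Nat.mul_le_mul_left _ (bell_mono (by
          have := (Finset.mem_Icc.1 hi).2; omega))
    _ = (∑ i ∈ Finset.Icc 1 k, Nat.choose n i) * bell (k + 1) := by
        rw [Finset.sum_mul]
    _ ≤ n ^ k * bell (k + 1) :=
        Nat.mul_le_mul_right _ (sum_choose_le k n hk hn)
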